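/- Let f : ℝ → ℝ be continuous with f(0)=0 such that t ↦ f(t)/|t| is strictly increasing on ℝ∖{0}, and let F(t)=∫_0^t f(s)ds. Then the map t ↦ F(t)/t² is strictly increasing on (0, ∞) and strictly decreasing on (−∞, 0). -/

import Mathlib

open MeasureTheory Filter Set Topology intervalIntegral

/-- Lemma 2.3(ii): if `t ↦ f(t)/|t|` is strictly increasing on `ℝ ∖ {0}`, then
`t ↦ F(t)/t²` is strictly increasing on `(0,∞)` and strictly decreasing on
`(−∞,0)`, where `F(t) = ∫₀ᵗ f`. -/
theorem F_div_sq_mono (f : ℝ → ℝ) (hf : Continuous f) (hf0 : f 0 = 0)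
    (hmono : StrictMonoOn (fun t => f t / |t|) {t : ℝ | t ≠ 0}) :
    StrictMonoOn (fun t => (∫ s in (0 : ℝ)..t, f s) / t ^ 2)
        (Set.Ioi (0 : ℝ)) ∧
    StrictAntiOn (fun t => (∫ s in (0 : ℝ)..t, f s) / t ^ 2)
        (Set.Iio (0 : ℝ)) := by
  set F : ℝ → ℝ := fun t => ∫ s in (0 : ℝ)..t, f s with hF
  have hFd : ∀ t : ℝ, HasDerivAt F (f t) t := fun t =>
    intervalIntegral.integral_hasDerivAt_right (hf.intervalIntegrable _ _)
      (hf.stronglyMeasurableAtFilter _ _) hf.continuousAt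
  -- key inequality: 2 F t < t * f t for t > 0
  have keypos : ∀ t : ℝ, 0 < t → 2 * F t < t * f t := by
    intro t ht
    have hlt : (∫ s in (0:ℝ)..t, f s) < ∫ s in (0:ℝ)..t, f t / t * s := by
      apply intervalIntegral.integral_lt_integral_of_continuousOn_of_le_of_exists_lt ht
        hf.continuousOn (by fun_prop)
      · intro s hs
        rcases eq_or_lt_of_le hs.2 with rfl | hst
        · rw [div_mul_cancel₀ _ ht.ne']
        · have := hmono (show s ∈ {t : ℝ | t ≠ 0} from (hs.1.ne')) (show t ∈ {t : ℝ | t ≠ 0} from ht.ne') hst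
          simp only [abs_of_pos hs.1, abs_of_pos ht] at this
          have := (div_lt_div_iff₀ hs.1 ht).mp this
          rw [div_mul_eq_mul_div, le_div_iff₀ ht]
          nlinarith
      · refine ⟨t/2, ⟨by linarith, by linarith⟩, ?_⟩
        have h2 : (0:ℝ) < t/2 := by linarith
        have := hmono (show t/2 ∈ {t : ℝ | t ≠ 0} from h2.ne') (show t ∈ {t : ℝ | t ≠ 0} from ht.ne') (by linarith)
        simp only [abs_of_pos h2, abs_of_pos ht] at this
        have := (div_lt_div_iff₀ h2 ht).mp this
        rw [div_mul_eq_mul_div, lt_div_iff₀ ht]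
        nlinarith
    have hint : (∫ s in (0:ℝ)..t, f t / t * s) = t * f t / 2 := by
      rw [intervalIntegral.integral_const_mul, integral_id]
      field_simp; ring
    rw [hint] at hlt
    linarith
  have keyneg : ∀ t : ℝ, t < 0 → 2 * F t < t * f t := by
    intro t ht
    have hlt : (∫ s in t..(0:ℝ), f t / (-t) * (-s)) < ∫ s in t..(0:ℝ), f s := by
      apply intervalIntegral.integral_lt_integral_of_continuousOn_of_le_of_exists_lt ht
        (by fun_prop) hf.continuousOn
      · intro s hs
        rcases eq_or_lt_of_le hs.2 with rfl | hst
        · simp [hf0]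
        · have := hmono (show t ∈ {t : ℝ | t ≠ 0} from ht.ne) (show s ∈ {t : ℝ | t ≠ 0} from hst.ne) hs.1
          simp only [abs_of_neg hst, abs_of_neg ht] at this
          have := (div_lt_div_iff₀ (by linarith : (0:ℝ) < -t) (by linarith : (0:ℝ) < -s)).mp this
          have hsneg : 0 < -s := by linarith
          rw [div_mul_eq_mul_div, div_le_iff₀ (by linarith : (0:ℝ) < -t)]
          nlinarith
      · refine ⟨t/2, ⟨by linarith, by linarith⟩, ?_⟩
        have h2 : t/2 < 0 := by linarith
        have := hmono (show t ∈ {t : ℝ | t ≠ 0} from ht.ne) (show t/2 ∈ {t : ℝ | t ≠ 0} from h2.ne) (by linarith)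
        simp only [abs_of_neg h2, abs_of_neg ht] at this
        have := (div_lt_div_iff₀ (by linarith : (0:ℝ) < -t) (by linarith : (0:ℝ) < -(t/2))).mp this
        rw [div_mul_eq_mul_div, div_lt_iff₀ (by linarith : (0:ℝ) < -t)]
        nlinarith
    have hint : (∫ s in t..(0:ℝ), f t / (-t) * (-s)) = - (t * f t) / 2 := by
      have : (∫ s in t..(0:ℝ), f t / (-t) * (-s)) = (f t / (-t)) * (- ∫ s in t..(0:ℝ), s) := by
        rw [← intervalIntegral.integral_neg, intervalIntegral.integral_const_mul]
      rw [this, integral_id]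
      have ht' : t ≠ 0 := ht.ne
      field_simp; ring
    have hFsym : F t = - ∫ s in t..(0:ℝ), f s := by
      show (∫ s in (0:ℝ)..t, f s) = -∫ s in t..(0:ℝ), f s
      exact intervalIntegral.integral_symm t 0
    rw [hint] at hlt
    rw [hFsym]
    linarith
  -- derivative of the quotient
  have hd : ∀ t : ℝ, t ≠ 0 →
      HasDerivAt (fun t => F t / t ^ 2) ((f t * t ^ 2 - F t * (2 * t)) / (t ^ 2) ^ 2) t := by
    intro t ht
    have h1 := (hFd t).div (hasDerivAt_pow 2 t) (pow_ne_zero 2 ht)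
    simp at h1; exact h1
  have hderiv : ∀ t : ℝ, t ≠ 0 →
      deriv (fun t => F t / t ^ 2) t = (f t * t ^ 2 - F t * (2 * t)) / (t ^ 2) ^ 2 :=
    fun t ht => (hd t ht).deriv
  have hcont : ∀ t : ℝ, t ≠ 0 → ContinuousAt (fun t => F t / t ^ 2) t :=
    fun t ht => (hd t ht).continuousAt
  constructor
  · apply strictMonoOn_of_deriv_pos (convex_Ioi 0)
    · exact fun x hx => (hcont x (ne_of_gt hx)).continuousWithinAt
    · intro x hx
      rw [interior_Ioi] at hx
      rw [hderiv x (ne_of_gt hx)]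
      apply div_pos
      · nlinarith [mul_pos (show (0:ℝ) < x from hx) (show (0:ℝ) < x * f x - 2 * F x by linarith [keypos x hx])]
      · exact pow_pos (pow_pos hx 2) 2
  · apply strictAntiOn_of_deriv_neg (convex_Iio 0)
    · exact fun x hx => (hcont x (ne_of_lt hx)).continuousWithinAt
    · intro x hx
      rw [interior_Iio] at hx
      rw [hderiv x (ne_of_lt hx)]
      apply div_neg_of_neg_of_pos
      · nlinarith [mul_neg_of_neg_of_pos (show x < (0:ℝ) from hx) (show (0:ℝ) < x * f x - 2 * F x by linarith [keyneg x hx])]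
      · exact pow_pos (pow_two_pos_of_ne_zero (ne_of_lt hx)) 2
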